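/- Let V be a right Banach ℍ-module, T ∈ B(V), and let P, P' ∈ B(V) be projections (P² = P, P'² = P') commuting with T. Assume that dist(σ_S(T|_{R(P)}), σ_S(T|_{N(P)})) > 0, that σ_S(T|_{R(P')}) = σ_S(T|_{R(P)}), and that σ_S(T|_{N(P')}) = σ_S(T|_{N(P)}). Then R(P') = R(P) and N(P') = N(P); consequently P' = P. -/

import Mathlib

/-!
Quaternionic setting: `ℍ` is the real quaternions.  A right Banach `ℍ`-module is
formalized as a real Banach space `V` together with a compatible `Module ℍᵐᵒᵖ V`
structure (right `ℍ`-action) satisfying `‖x • q‖ = ‖x‖ * |q|`; bounded right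
`ℍ`-linear operators are the continuous `ℍᵐᵒᵖ`-linear maps `V →L[ℍᵐᵒᵖ] V`.
-/

open MulOpposite

notation "ℍ" => Quaternion ℝ

section Defs

variable {W : Type*} [NormedAddCommGroup W] [Module ℍᵐᵒᵖ W] [Module ℝ W]
  [SMulCommClass ℍᵐᵒᵖ ℝ W] [ContinuousConstSMul ℝ W]

/-- `Q_q(T) = T² − 2 Re(q) T + |q|² I`. -/
noncomputable def Qs (T : W →L[ℍᵐᵒᵖ] W) (q : ℍ) : W →L[ℍᵐᵒᵖ] W :=
  T * T - (2 * q.re) • T + (‖q‖ ^ 2) • (1 : W →L[ℍᵐᵒᵖ] W)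

/-- The S-resolvent set: `q` such that `Q_q(T)` is bijective with bounded inverse,
i.e. invertible in the ring `B(W)`. -/
noncomputable def sResolvent (T : W →L[ℍᵐᵒᵖ] W) : Set ℍ :=
  {q | IsUnit (Qs T q)}

/-- The S-spectrum `σ_S(T) = ℍ \ ρ_S(T)`. -/
noncomputable def sSpectrum (T : W →L[ℍᵐᵒᵖ] W) : Set ℍ :=
  {q | ¬ IsUnit (Qs T q)}

/-- A compact operator: the image of the closed unit ball is relatively compact. -/
def IsCompactOp (K : W →L[ℍᵐᵒᵖ] W) : Prop :=
  IsCompact (closure (⇑K '' Metric.closedBall (0 : W) 1))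

/-- `S` is a quasi-inverse of `T` if `S T = I - K₁` and `T S = I - K₂` with `K₁, K₂` compact. -/
def IsQuasiInverse (S T : W →L[ℍᵐᵒᵖ] W) : Prop :=
  ∃ K₁ K₂ : W →L[ℍᵐᵒᵖ] W, IsCompactOp K₁ ∧ IsCompactOp K₂ ∧
    S * T = 1 - K₁ ∧ T * S = 1 - K₂

/-- The essential S-spectrum: `q` such that `Q_q(T)` admits no quasi-inverse. -/
noncomputable def essSpectrum (T : W →L[ℍᵐᵒᵖ] W) : Set ℍ :=
  {q | ¬ ∃ S : W →L[ℍᵐᵒᵖ] W, IsQuasiInverse S (Qs T q)}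

/-- The Weyl S-spectrum: `⋂ σ_S(T + K)` over all compact `K`. -/
noncomputable def weylSpectrum (T : W →L[ℍᵐᵒᵖ] W) : Set ℍ :=
  ⋂ K ∈ {K : W →L[ℍᵐᵒᵖ] W | IsCompactOp K}, sSpectrum (T + K)

/-- The 2-sphere `[q] = {h q h⁻¹ : h ∈ ℍ \ {0}}`. -/
def qSphere (q : ℍ) : Set ℍ := {p | ∃ h : ℍ, h ≠ 0 ∧ p = h * q * h⁻¹}

/-- Minimum modulus `μ(T) = inf {‖T x‖ : ‖x‖ = 1}`. -/
noncomputable def muMin (T : W →L[ℍᵐᵒᵖ] W) : ℝ :=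
  sInf {c : ℝ | ∃ x : W, ‖x‖ = 1 ∧ c = ‖T x‖}

/-- Operator norm of a bounded right `ℍ`-linear operator. -/
noncomputable def opNorm (T : W →L[ℍᵐᵒᵖ] W) : ℝ :=
  sInf {c : ℝ | 0 ≤ c ∧ ∀ x : W, ‖T x‖ ≤ c * ‖x‖}

/-- Restriction of `T` to an invariant submodule. -/
noncomputable def restrictOp (T : W →L[ℍᵐᵒᵖ] W) (M : Submodule ℍᵐᵒᵖ W)
    (h : ∀ x ∈ M, T x ∈ M) : ↥M →L[ℍᵐᵒᵖ] ↥M where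
  toLinearMap := (T : W →ₗ[ℍᵐᵒᵖ] W).restrict h
  cont := Continuous.subtype_mk (T.continuous.comp continuous_subtype_val) _

end Defs

section Sub

variable {V : Type*} [NormedAddCommGroup V] [NormedSpace ℝ V]
  [Module ℍᵐᵒᵖ V] [IsScalarTower ℝ ℍᵐᵒᵖ V] [SMulCommClass ℍᵐᵒᵖ ℝ V]

instance (M : Submodule ℍᵐᵒᵖ V) : SMulCommClass ℍᵐᵒᵖ ℝ ↥M := by
  constructor
  intro q r x
  apply Subtype.ext
  simp only [Submodule.coe_smul_of_tower, SetLike.val_smul]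
  exact smul_comm q r (x : V)

instance (M : Submodule ℍᵐᵒᵖ V) : ContinuousConstSMul ℝ ↥M := by
  constructor
  intro r
  have h : Continuous fun x : ↥M => r • (x : V) :=
    (continuous_const_smul r).comp continuous_subtype_val
  exact Continuous.subtype_mk h _

/-- `q` is a right eigenvalue of finite type of `T`: `V` is the direct sum of two closed
`T`-invariant right `ℍ`-submodules `M₁`, `M₂` with `M₁` finite-dimensional over `ℍ`,
`σ_S(T|M₁) ∩ σ_S(T|M₂) = ∅` and `σ_S(T|M₁) = [q]`. -/
noncomputable def IsFiniteTypeEigenvalue (T : V →L[ℍᵐᵒᵖ] V) (q : ℍ) : Prop :=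
  ∃ (M₁ M₂ : Submodule ℍᵐᵒᵖ V) (h₁ : ∀ x ∈ M₁, T x ∈ M₁) (h₂ : ∀ x ∈ M₂, T x ∈ M₂),
    IsClosed (M₁ : Set V) ∧ IsClosed (M₂ : Set V) ∧ IsCompl M₁ M₂ ∧
    FiniteDimensional ℍᵐᵒᵖ ↥M₁ ∧
    sSpectrum (restrictOp T M₁ h₁) ∩ sSpectrum (restrictOp T M₂ h₂) = ∅ ∧
    sSpectrum (restrictOp T M₁ h₁) = qSphere q

end Sub

section Auxiliary

/-! ### Auxiliary general lemmas for the proof of `stmt3`. -/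

/-- Rosenblum-type lemma via Gelfand theory: if `a` and `b` commute in a complex
Banach algebra and `a - b` is not a unit, then their spectra intersect. -/
theorem stmt3_commute_spec_intersect {𝔸 : Type*} [NormedRing 𝔸] [NormedAlgebra ℂ 𝔸]
    [CompleteSpace 𝔸] {a b : 𝔸} (hab : Commute a b) (h : ¬ IsUnit (a - b)) :
    ∃ z : ℂ, z ∈ spectrum ℂ a ∧ z ∈ spectrum ℂ b := by
  classical
  set s : Set 𝔸 := Set.centralizer {a, b} with hs
  set C : Subalgebra ℂ 𝔸 := Subalgebra.centralizer ℂ s with hC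
  have hmemC : ∀ x : 𝔸, (∀ y ∈ s, y * x = x * y) → x ∈ C := by
    intro x hx
    exact (Subalgebra.mem_centralizer_iff ℂ).2 (fun y hy => (hx y hy))
  have pairmem : ∀ m : 𝔸, m ∈ ({a, b} : Set 𝔸) ↔ m = a ∨ m = b := by
    intro m; simp [Set.mem_insert_iff]
  have haS : a ∈ s := by
    apply Set.mem_centralizer_iff.2
    intro m hm
    rcases (pairmem m).1 hm with rfl | rfl
    · rfl
    · exact hab.symm
  have hbS : b ∈ s := by
    apply Set.mem_centralizer_iff.2
    intro m hm
    rcases (pairmem m).1 hm with rfl | rfl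
    · exact hab
    · rfl
  have haC : a ∈ C := hmemC a (fun y hy => (hy a (by simp)).symm)
  have hbC : b ∈ C := hmemC b (fun y hy => (hy b (by simp)).symm)
  -- C is commutative
  have hcomm : ∀ x y : C, x * y = y * x := by
    intro x y
    have hyS : (y : 𝔸) ∈ s := by
      apply Set.mem_centralizer_iff.2
      intro m hm
      rcases (pairmem m).1 hm with rfl | rfl
      · exact (Subalgebra.mem_centralizer_iff ℂ).1 y.2 _ haS
      · exact (Subalgebra.mem_centralizer_iff ℂ).1 y.2 _ hbS
    have := (Subalgebra.mem_centralizer_iff ℂ).1 x.2 (y : 𝔸) hyS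
    exact Subtype.ext this.symm
  -- C is closed
  have hclosed : IsClosed (C : Set 𝔸) := by
    have : (C : Set 𝔸) = ⋂ y ∈ s, {x : 𝔸 | y * x = x * y} := by
      ext x
      simp only [Set.mem_iInter, Set.mem_setOf_eq, SetLike.mem_coe,
        Subalgebra.mem_centralizer_iff, Set.mem_centralizer_iff]
      exact Iff.rfl
    rw [this]
    exact isClosed_biInter fun y _ => isClosed_eq (by fun_prop) (by fun_prop)
  letI : CompleteSpace C := hclosed.completeSpace_coe
  letI : NormedCommRing C := { (inferInstance : NormedRing C) with mul_comm := hcomm }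
  -- a - b is not a unit in C
  have hne : ¬ IsUnit ((⟨a, haC⟩ : C) - ⟨b, hbC⟩) := by
    intro hu
    exact h (by simpa using hu.map C.val)
  obtain ⟨f, hf⟩ := WeakDual.CharacterSpace.exists_apply_eq_zero hne
  have hfab : f ⟨a, haC⟩ = f ⟨b, hbC⟩ := by
    have := hf
    rw [map_sub, sub_eq_zero] at this
    exact this
  set z : ℂ := f ⟨a, haC⟩ with hz
  -- key: if `x ∈ C` is a unit in `𝔸`, it's a unit in `C`
  have hkey : ∀ (x : 𝔸) (hx : x ∈ C), IsUnit x → IsUnit (⟨x, hx⟩ : C) := by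
    intro x hx hux
    obtain ⟨u, rfl⟩ := hux
    have hinv : ((u⁻¹ : 𝔸ˣ) : 𝔸) ∈ C := by
      apply hmemC
      intro y hy
      have hxy : y * u = u * y := (Subalgebra.mem_centralizer_iff ℂ).1 hx y hy
      calc y * ((u⁻¹ : 𝔸ˣ) : 𝔸) = (u⁻¹ : 𝔸ˣ) * (u * y) * u⁻¹ := by
            rw [← mul_assoc, Units.inv_mul, one_mul]
          _ = (u⁻¹ : 𝔸ˣ) * (y * u) * u⁻¹ := by rw [hxy]
          _ = ((u⁻¹ : 𝔸ˣ) : 𝔸) * y := by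
            rw [mul_assoc, mul_assoc, Units.mul_inv, mul_one]
    refine isUnit_iff_exists_inv.2 ⟨⟨(u⁻¹ : 𝔸ˣ), hinv⟩, ?_⟩
    ext
    simp
  refine ⟨z, ?_, ?_⟩
  · by_contra hz'
    rw [spectrum.notMem_iff] at hz'
    have hmem : algebraMap ℂ 𝔸 z - a ∈ C := sub_mem (Subalgebra.algebraMap_mem C z) haC
    have hun := hkey _ hmem hz'
    have h0 : f ⟨algebraMap ℂ 𝔸 z - a, hmem⟩ = 0 := by
      have heq : (⟨algebraMap ℂ 𝔸 z - a, hmem⟩ : C) = algebraMap ℂ C z - ⟨a, haC⟩ := by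
        ext; simp
      rw [heq, map_sub, AlgHomClass.commutes, sub_eq_zero]
      simpa using hz.symm
    exact ((hun.map f).ne_zero (by simpa using h0)).elim
  · by_contra hz'
    rw [spectrum.notMem_iff] at hz'
    have hmem : algebraMap ℂ 𝔸 z - b ∈ C := sub_mem (Subalgebra.algebraMap_mem C z) hbC
    have hun := hkey _ hmem hz'
    have h0 : f ⟨algebraMap ℂ 𝔸 z - b, hmem⟩ = 0 := by
      have heq : (⟨algebraMap ℂ 𝔸 z - b, hmem⟩ : C) = algebraMap ℂ C z - ⟨b, hbC⟩ := by
        ext; simp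
      rw [heq, map_sub, AlgHomClass.commutes, sub_eq_zero]
      simpa using hfab
    exact ((hun.map f).ne_zero (by simpa using h0)).elim

set_option maxHeartbeats 1000000 in
set_option synthInstance.maxHeartbeats 400000 in
open ContinuousLinearMap in
/-- Rosenblum: an intertwiner between operators with disjoint spectra vanishes. -/
theorem stmt3_sylvester {X Y : Type*} [NormedAddCommGroup X] [NormedSpace ℂ X] [CompleteSpace X]
    [NormedAddCommGroup Y] [NormedSpace ℂ Y] [CompleteSpace Y]
    (A : X →L[ℂ] X) (B : Y →L[ℂ] Y) (S : X →L[ℂ] Y)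
    (hS : B.comp S = S.comp A)
    (hdisj : ∀ z : ℂ, z ∈ spectrum ℂ A → z ∈ spectrum ℂ B → False) : S = 0 := by
  classical
  set L : (X →L[ℂ] Y) →L[ℂ] (X →L[ℂ] Y) := compL ℂ X Y Y B with hL
  set R : (X →L[ℂ] Y) →L[ℂ] (X →L[ℂ] Y) := (compL ℂ X X Y).flip A with hR
  have hLapp : ∀ S' : X →L[ℂ] Y, L S' = B.comp S' := fun _ => rfl
  have hRapp : ∀ S' : X →L[ℂ] Y, R S' = S'.comp A := fun _ => rfl
  have hcomm : Commute L R := by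
    apply ContinuousLinearMap.ext
    intro S'
    simp only [ContinuousLinearMap.mul_apply, hLapp, hRapp, ContinuousLinearMap.comp_assoc]
  have transferL : ∀ D : Y →L[ℂ] Y, IsUnit D → IsUnit (compL ℂ X Y Y D) := by
    rintro D ⟨u, rfl⟩
    refine ⟨⟨compL ℂ X Y Y ↑u, compL ℂ X Y Y ↑u⁻¹, ?_, ?_⟩, rfl⟩
    · apply ContinuousLinearMap.ext; intro S'; apply ContinuousLinearMap.ext; intro x
      have := DFunLike.congr_fun u.mul_inv (S' x)
      simp only [ContinuousLinearMap.mul_apply, ContinuousLinearMap.one_apply] at this ⊢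
      simp only [compL_apply, ContinuousLinearMap.coe_comp', Function.comp_apply]
      exact this
    · apply ContinuousLinearMap.ext; intro S'; apply ContinuousLinearMap.ext; intro x
      have := DFunLike.congr_fun u.inv_mul (S' x)
      simp only [ContinuousLinearMap.mul_apply, ContinuousLinearMap.one_apply] at this ⊢
      simp only [compL_apply, ContinuousLinearMap.coe_comp', Function.comp_apply]
      exact this
  have transferR : ∀ D : X →L[ℂ] X, IsUnit D → IsUnit ((compL ℂ X X Y).flip D) := by
    rintro D ⟨u, rfl⟩
    refine ⟨⟨(compL ℂ X X Y).flip ↑u, (compL ℂ X X Y).flip ↑u⁻¹, ?_, ?_⟩, rfl⟩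
    · apply ContinuousLinearMap.ext; intro S'; apply ContinuousLinearMap.ext; intro x
      have := DFunLike.congr_fun u.inv_mul x
      simp only [ContinuousLinearMap.mul_apply, ContinuousLinearMap.one_apply] at this ⊢
      simp only [ContinuousLinearMap.flip_apply, compL_apply, ContinuousLinearMap.coe_comp',
        Function.comp_apply]
      rw [this]
    · apply ContinuousLinearMap.ext; intro S'; apply ContinuousLinearMap.ext; intro x
      have := DFunLike.congr_fun u.mul_inv x
      simp only [ContinuousLinearMap.mul_apply, ContinuousLinearMap.one_apply] at this ⊢
      simp only [ContinuousLinearMap.flip_apply, compL_apply, ContinuousLinearMap.coe_comp',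
        Function.comp_apply]
      rw [this]
  have hLspec : spectrum ℂ L ⊆ spectrum ℂ B := by
    intro z hz
    by_contra hz'
    rw [spectrum.notMem_iff] at hz'
    rw [spectrum.mem_iff] at hz
    apply hz
    have h1 : algebraMap ℂ ((X →L[ℂ] Y) →L[ℂ] (X →L[ℂ] Y)) z - L =
        compL ℂ X Y Y (algebraMap ℂ (Y →L[ℂ] Y) z - B) := by
      apply ContinuousLinearMap.ext
      intro S''
      simp [Algebra.algebraMap_eq_smul_one, hLapp, ContinuousLinearMap.one_def]
    rw [h1]
    exact transferL _ hz'
  have hRspec : spectrum ℂ R ⊆ spectrum ℂ A := by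
    intro z hz
    by_contra hz'
    rw [spectrum.notMem_iff] at hz'
    rw [spectrum.mem_iff] at hz
    apply hz
    have h1 : algebraMap ℂ ((X →L[ℂ] Y) →L[ℂ] (X →L[ℂ] Y)) z - R =
        (compL ℂ X X Y).flip (algebraMap ℂ (X →L[ℂ] X) z - A) := by
      apply ContinuousLinearMap.ext
      intro S''
      simp [Algebra.algebraMap_eq_smul_one, hRapp, ContinuousLinearMap.one_def]
    rw [h1]
    exact transferR _ hz'
  have hunit : IsUnit (L - R) := by
    by_contra hne
    obtain ⟨z, hzL, hzR⟩ :=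
      stmt3_commute_spec_intersect (𝔸 := (X →L[ℂ] Y) →L[ℂ] (X →L[ℂ] Y)) hcomm hne
    exact hdisj z (hRspec hzR) (hLspec hzL)
  obtain ⟨u, hu⟩ := hunit
  have h0 : (L - R) S = 0 := by
    simp only [ContinuousLinearMap.sub_apply, hLapp, hRapp, hS, sub_self]
  have h2 : ((u⁻¹ : _ˣ) : _) * (L - R) = 1 := by rw [← hu]; exact u.inv_mul
  calc S = (((u⁻¹ : _ˣ) : _) * (L - R)) S := by rw [h2]; simp
  _ = ((u⁻¹ : _ˣ) : (X →L[ℂ] Y) →L[ℂ] (X →L[ℂ] Y)) ((L - R) S) := rfl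
  _ = 0 := by rw [h0]; simp

/-- The embedding `ℂ →+* ℍᵐᵒᵖ`. -/
noncomputable def stmt3_cToQop : ℂ →+* ℍᵐᵒᵖ :=
  RingHom.toOpposite (Quaternion.ofComplex.toRingHom)
    (fun x y => by
      show Quaternion.ofComplex x * Quaternion.ofComplex y =
        Quaternion.ofComplex y * Quaternion.ofComplex x
      rw [← map_mul, ← map_mul, mul_comm])

/-- The complex module structure coming from the right quaternionic structure. -/
noncomputable def stmt3_cMod (W : Type*) [AddCommGroup W] [Module ℍᵐᵒᵖ W] : Module ℂ W :=
  Module.compHom W stmt3_cToQop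

theorem stmt3_norm_coeComplex (z : ℂ) : ‖(Quaternion.coeComplex z : ℍ)‖ = ‖z‖ := by
  have h1 : ‖(Quaternion.coeComplex z : ℍ)‖ * ‖(Quaternion.coeComplex z : ℍ)‖ = ‖z‖ * ‖z‖ := by
    rw [← Quaternion.normSq_eq_norm_mul_self]
    have : Quaternion.normSq (Quaternion.coeComplex z) = Complex.normSq z := by
      rw [Quaternion.normSq_def', Complex.normSq_apply]
      simp [Quaternion.coeComplex, sq]
    rw [this, Complex.normSq_eq_norm_sq, sq]
  calc ‖(Quaternion.coeComplex z : ℍ)‖ = Real.sqrt (‖(Quaternion.coeComplex z : ℍ)‖ * ‖(Quaternion.coeComplex z : ℍ)‖) :=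
        (Real.sqrt_mul_self (norm_nonneg _)).symm
  _ = Real.sqrt (‖z‖ * ‖z‖) := by rw [h1]
  _ = ‖z‖ := Real.sqrt_mul_self (norm_nonneg _)

/-- The complex normed space structure coming from the right quaternionic structure. -/
noncomputable def stmt3_cNS (W : Type*) [NormedAddCommGroup W] [Module ℍᵐᵒᵖ W]
    (hn : ∀ (x : W) (q : ℍ), ‖op q • x‖ = ‖x‖ * ‖q‖) : NormedSpace ℂ W :=
  { stmt3_cMod W with
    norm_smul_le := by
      intro z x
      show ‖op (Quaternion.coeComplex z) • x‖ ≤ ‖z‖ * ‖x‖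
      rw [hn, stmt3_norm_coeComplex, mul_comm] }

/-- An `ℍᵐᵒᵖ`-linear continuous map is `ℂ`-linear for compatible complex structures. -/
noncomputable def stmt3_toCL {X Y : Type*} [NormedAddCommGroup X] [Module ℍᵐᵒᵖ X] [Module ℂ X]
    [NormedAddCommGroup Y] [Module ℍᵐᵒᵖ Y] [Module ℂ Y]
    (hX : ∀ (z : ℂ) (x : X), z • x = op (Quaternion.coeComplex z) • x)
    (hY : ∀ (z : ℂ) (y : Y), z • y = op (Quaternion.coeComplex z) • y)
    (f : X →L[ℍᵐᵒᵖ] Y) : X →L[ℂ] Y :=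
  { toLinearMap :=
    { toFun := f
      map_add' := fun a b => map_add f a b
      map_smul' := fun z x => by
        simp only [RingHom.id_apply]
        rw [hX, hY]
        exact map_smul f _ x }
    cont := f.cont }

@[simp] theorem stmt3_toCL_apply {X Y : Type*} [NormedAddCommGroup X] [Module ℍᵐᵒᵖ X]
    [Module ℂ X] [NormedAddCommGroup Y] [Module ℍᵐᵒᵖ Y] [Module ℂ Y]
    (hX : ∀ (z : ℂ) (x : X), z • x = op (Quaternion.coeComplex z) • x)
    (hY : ∀ (z : ℂ) (y : Y), z • y = op (Quaternion.coeComplex z) • y)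
    (f : X →L[ℍᵐᵒᵖ] Y) (x : X) : stmt3_toCL hX hY f x = f x := rfl

set_option maxHeartbeats 1000000 in
set_option synthInstance.maxHeartbeats 400000 in
/-- Bridge: a complex spectral point of `T` gives a point of the S-spectrum. -/
theorem stmt3_bridge {W : Type*} [NormedAddCommGroup W] [Module ℍᵐᵒᵖ W] [Module ℝ W]
    [SMulCommClass ℍᵐᵒᵖ ℝ W] [ContinuousConstSMul ℝ W] [NormedSpace ℂ W]
    (hsc : ∀ (z : ℂ) (x : W), z • x = op (Quaternion.coeComplex z) • x)
    (hsr : ∀ (r : ℝ) (x : W), (r : ℂ) • x = r • x)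
    (T : W →L[ℍᵐᵒᵖ] W) (z : ℂ)
    (hz : z ∈ spectrum ℂ (stmt3_toCL hsc hsc T)) :
    Quaternion.coeComplex z ∈ sSpectrum T := by
  show ¬ IsUnit (Qs T (Quaternion.coeComplex z))
  intro hq
  have hTz : ∀ (w : ℂ) (x : W), T (w • x) = w • T x := fun w x => by
    rw [hsc, hsc]; exact map_smul T _ x
  have halg : ∀ (w : ℂ) (x : W), algebraMap ℂ (W →L[ℂ] W) w x = w • x := fun w x => by
    rw [Algebra.algebraMap_eq_smul_one]; simp
  have hnormsq : ‖(Quaternion.coeComplex z : ℍ)‖ ^ 2 = Complex.normSq z := by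
    rw [stmt3_norm_coeComplex, Complex.sq_norm]
  have hfact : (stmt3_toCL hsc hsc T - algebraMap ℂ (W →L[ℂ] W) (starRingEnd ℂ z)) *
      (stmt3_toCL hsc hsc T - algebraMap ℂ (W →L[ℂ] W) z) =
      stmt3_toCL hsc hsc (Qs T (Quaternion.coeComplex z)) := by
    apply ContinuousLinearMap.ext
    intro x
    have hrhs : stmt3_toCL hsc hsc (Qs T (Quaternion.coeComplex z)) x
        = T (T x) - (2 * z.re) • T x + (Complex.normSq z) • x := by
      rw [stmt3_toCL_apply]
      simp only [Qs, ContinuousLinearMap.add_apply, ContinuousLinearMap.sub_apply,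
        ContinuousLinearMap.smul_apply, ContinuousLinearMap.mul_apply,
        ContinuousLinearMap.one_apply, Quaternion.re_coeComplex]
      rw [hnormsq]
    rw [ContinuousLinearMap.mul_apply, hrhs]
    simp only [ContinuousLinearMap.sub_apply, stmt3_toCL_apply, halg]
    rw [map_sub, hTz, smul_sub, smul_smul]
    have e1 : ((starRingEnd ℂ) z * z) • x = (Complex.normSq z) • x := by
      rw [← hsr]; congr 1; rw [← Complex.normSq_eq_conj_mul_self]
    have e2 : (2 * z.re : ℝ) • T x = z • T x + (starRingEnd ℂ) z • T x := by
      rw [← hsr, ← add_smul]; congr 1; rw [Complex.add_conj]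
    rw [e1, e2]
    abel
  have hQc : IsUnit ((stmt3_toCL hsc hsc T - algebraMap ℂ (W →L[ℂ] W) (starRingEnd ℂ z)) *
      (stmt3_toCL hsc hsc T - algebraMap ℂ (W →L[ℂ] W) z)) := by
    rw [hfact]
    obtain ⟨u, hu⟩ := hq
    refine ⟨⟨stmt3_toCL hsc hsc ↑u, stmt3_toCL hsc hsc ↑u⁻¹, ?_, ?_⟩,
      congrArg (stmt3_toCL hsc hsc) hu⟩
    · apply ContinuousLinearMap.ext; intro x
      have := DFunLike.congr_fun u.mul_inv x
      simp only [ContinuousLinearMap.mul_apply, ContinuousLinearMap.one_apply] at this ⊢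
      simpa using this
    · apply ContinuousLinearMap.ext; intro x
      have := DFunLike.congr_fun u.inv_mul x
      simp only [ContinuousLinearMap.mul_apply, ContinuousLinearMap.one_apply] at this ⊢
      simpa using this
  have hcomm : Commute (stmt3_toCL hsc hsc T - algebraMap ℂ (W →L[ℂ] W) (starRingEnd ℂ z))
      (stmt3_toCL hsc hsc T - algebraMap ℂ (W →L[ℂ] W) z) := by
    have c1 : Commute (stmt3_toCL hsc hsc T) (algebraMap ℂ (W →L[ℂ] W) z) :=
      (Algebra.commutes z (stmt3_toCL hsc hsc T)).symm
    have c2 : Commute (stmt3_toCL hsc hsc T) (algebraMap ℂ (W →L[ℂ] W) (starRingEnd ℂ z)) :=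
      (Algebra.commutes (starRingEnd ℂ z) (stmt3_toCL hsc hsc T)).symm
    have c3 : Commute (algebraMap ℂ (W →L[ℂ] W) (starRingEnd ℂ z))
        (algebraMap ℂ (W →L[ℂ] W) z) := by
      show _ * _ = _ * _
      rw [← map_mul, ← map_mul, mul_comm]
    exact Commute.sub_left ((Commute.refl _).sub_right c1) (c2.symm.sub_right c3)
  have hunit : IsUnit (stmt3_toCL hsc hsc T - algebraMap ℂ (W →L[ℂ] W) z) :=
    ((hcomm.isUnit_mul_iff).1 hQc).2
  rw [spectrum.mem_iff] at hz
  apply hz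
  have hneg : algebraMap ℂ (W →L[ℂ] W) z - stmt3_toCL hsc hsc T =
      -(stmt3_toCL hsc hsc T - algebraMap ℂ (W →L[ℂ] W) z) := by rw [neg_sub]
  rw [hneg]
  exact hunit.neg

theorem stmt3_real_op_smul {V : Type*} [NormedAddCommGroup V] [NormedSpace ℝ V]
    [Module ℍᵐᵒᵖ V] [IsScalarTower ℝ ℍᵐᵒᵖ V] (r : ℝ) (v : V) :
    op ((r : ℍ)) • v = r • v := by
  have h1 : (r : ℍ) = r • (1 : ℍ) := by
    rw [← Algebra.algebraMap_eq_smul_one]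
    rfl
  rw [h1]
  have h2 : op (r • (1 : ℍ)) = r • (1 : ℍᵐᵒᵖ) := by
    simp [MulOpposite.op_smul]
  rw [h2, smul_assoc, one_smul]

/-- Restriction of a continuous `ℍᵐᵒᵖ`-linear map between submodules. -/
noncomputable def stmt3_betweenOp {V : Type*} [NormedAddCommGroup V]
    [Module ℍᵐᵒᵖ V] (G : V →L[ℍᵐᵒᵖ] V) (M₁ M₂ : Submodule ℍᵐᵒᵖ V)
    (h : ∀ x ∈ M₁, G x ∈ M₂) : ↥M₁ →L[ℍᵐᵒᵖ] ↥M₂ where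
  toLinearMap := (G : V →ₗ[ℍᵐᵒᵖ] V).restrict h
  cont := Continuous.subtype_mk (G.continuous.comp continuous_subtype_val) _

set_option maxHeartbeats 1000000 in
set_option synthInstance.maxHeartbeats 400000 in
/-- Key step: an operator intertwining restrictions of `T` with disjoint S-spectra
vanishes on the first submodule. -/
theorem stmt3_incl_vanish {V : Type*} [NormedAddCommGroup V] [NormedSpace ℝ V] [CompleteSpace V]
    [Module ℍᵐᵒᵖ V] [IsScalarTower ℝ ℍᵐᵒᵖ V] [SMulCommClass ℍᵐᵒᵖ ℝ V]
    (hnorm : ∀ (x : V) (q : ℍ), ‖op q • x‖ = ‖x‖ * ‖q‖)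
    (T G : V →L[ℍᵐᵒᵖ] V) (M₁ M₂ : Submodule ℍᵐᵒᵖ V)
    (hM₁ : IsClosed (M₁ : Set V)) (hM₂ : IsClosed (M₂ : Set V))
    (hA : ∀ x ∈ M₁, T x ∈ M₁) (hB : ∀ x ∈ M₂, T x ∈ M₂)
    (hG : ∀ x ∈ M₁, G x ∈ M₂)
    (hGT : ∀ x : V, G (T x) = T (G x))
    (hdisj : ∀ q : ℍ, q ∈ sSpectrum (restrictOp T M₁ hA) →
      q ∈ sSpectrum (restrictOp T M₂ hB) → False) :
    ∀ x ∈ M₁, G x = 0 := by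
  letI : CompleteSpace ↥M₁ := hM₁.completeSpace_coe
  letI : CompleteSpace ↥M₂ := hM₂.completeSpace_coe
  letI ns₁ : NormedSpace ℂ ↥M₁ := stmt3_cNS ↥M₁ (fun x q => hnorm (x : V) q)
  letI ns₂ : NormedSpace ℂ ↥M₂ := stmt3_cNS ↥M₂ (fun x q => hnorm (x : V) q)
  have hsc₁ : ∀ (z : ℂ) (x : ↥M₁), z • x = op (Quaternion.coeComplex z) • x := fun _ _ => rfl
  have hsc₂ : ∀ (z : ℂ) (x : ↥M₂), z • x = op (Quaternion.coeComplex z) • x := fun _ _ => rfl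
  have hsr₁ : ∀ (r : ℝ) (x : ↥M₁), (r : ℂ) • x = r • x := by
    intro r x
    apply Subtype.ext
    show op ((Quaternion.coeComplex (r : ℂ)) : ℍ) • (x : V) = r • (x : V)
    rw [Quaternion.coeComplex_coe]
    exact stmt3_real_op_smul r (x : V)
  have hsr₂ : ∀ (r : ℝ) (x : ↥M₂), (r : ℂ) • x = r • x := by
    intro r x
    apply Subtype.ext
    show op ((Quaternion.coeComplex (r : ℂ)) : ℍ) • (x : V) = r • (x : V)
    rw [Quaternion.coeComplex_coe]
    exact stmt3_real_op_smul r (x : V)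
  have hint : (stmt3_toCL hsc₂ hsc₂ (restrictOp T M₂ hB)).comp
        (stmt3_toCL hsc₁ hsc₂ (stmt3_betweenOp G M₁ M₂ hG)) =
      (stmt3_toCL hsc₁ hsc₂ (stmt3_betweenOp G M₁ M₂ hG)).comp
        (stmt3_toCL hsc₁ hsc₁ (restrictOp T M₁ hA)) := by
    apply ContinuousLinearMap.ext
    intro x
    apply Subtype.ext
    show T (G (x : V)) = G (T (x : V))
    exact (hGT (x : V)).symm
  have hzero := stmt3_sylvester (stmt3_toCL hsc₁ hsc₁ (restrictOp T M₁ hA))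
    (stmt3_toCL hsc₂ hsc₂ (restrictOp T M₂ hB))
    (stmt3_toCL hsc₁ hsc₂ (stmt3_betweenOp G M₁ M₂ hG)) hint ?_
  · intro x hx
    have := DFunLike.congr_fun hzero ⟨x, hx⟩
    have h00 : (stmt3_toCL hsc₁ hsc₂ (stmt3_betweenOp G M₁ M₂ hG)) ⟨x, hx⟩ = (0 : ↥M₂) := by
      rw [this]; rfl
    exact congrArg Subtype.val h00
  · intro z hz1 hz2
    exact hdisj (Quaternion.coeComplex z)
      (stmt3_bridge hsc₁ hsr₁ (restrictOp T M₁ hA) z hz1)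
      (stmt3_bridge hsc₂ hsr₂ (restrictOp T M₂ hB) z hz2)

end Auxiliary


theorem stmt3 {V : Type*} [NormedAddCommGroup V] [NormedSpace ℝ V] [CompleteSpace V]
    [Module ℍᵐᵒᵖ V] [IsScalarTower ℝ ℍᵐᵒᵖ V] [SMulCommClass ℍᵐᵒᵖ ℝ V]
    (hnorm : ∀ (x : V) (q : ℍ), ‖op q • x‖ = ‖x‖ * ‖q‖)
    (T P P' : V →L[ℍᵐᵒᵖ] V)
    (hP : P * P = P) (hP' : P' * P' = P')
    (hTP : T * P = P * T) (hTP' : T * P' = P' * T)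
    (h₁ : ∀ x ∈ LinearMap.range (P : V →ₗ[ℍᵐᵒᵖ] V), T x ∈ LinearMap.range (P : V →ₗ[ℍᵐᵒᵖ] V))
    (h₂ : ∀ x ∈ LinearMap.ker (P : V →ₗ[ℍᵐᵒᵖ] V), T x ∈ LinearMap.ker (P : V →ₗ[ℍᵐᵒᵖ] V))
    (h₁' : ∀ x ∈ LinearMap.range (P' : V →ₗ[ℍᵐᵒᵖ] V), T x ∈ LinearMap.range (P' : V →ₗ[ℍᵐᵒᵖ] V))
    (h₂' : ∀ x ∈ LinearMap.ker (P' : V →ₗ[ℍᵐᵒᵖ] V), T x ∈ LinearMap.ker (P' : V →ₗ[ℍᵐᵒᵖ] V))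
    (hdist : ∃ ε > (0 : ℝ), ∀ a ∈ sSpectrum (restrictOp T (LinearMap.range (P : V →ₗ[ℍᵐᵒᵖ] V)) h₁),
      ∀ b ∈ sSpectrum (restrictOp T (LinearMap.ker (P : V →ₗ[ℍᵐᵒᵖ] V)) h₂), ε ≤ dist a b)
    (hσ₁ : sSpectrum (restrictOp T (LinearMap.range (P' : V →ₗ[ℍᵐᵒᵖ] V)) h₁') =
      sSpectrum (restrictOp T (LinearMap.range (P : V →ₗ[ℍᵐᵒᵖ] V)) h₁))
    (hσ₂ : sSpectrum (restrictOp T (LinearMap.ker (P' : V →ₗ[ℍᵐᵒᵖ] V)) h₂') =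
      sSpectrum (restrictOp T (LinearMap.ker (P : V →ₗ[ℍᵐᵒᵖ] V)) h₂)) :
    LinearMap.range (P' : V →ₗ[ℍᵐᵒᵖ] V) = LinearMap.range (P : V →ₗ[ℍᵐᵒᵖ] V) ∧ LinearMap.ker (P' : V →ₗ[ℍᵐᵒᵖ] V) = LinearMap.ker (P : V →ₗ[ℍᵐᵒᵖ] V) ∧ P' = P := by
  obtain ⟨ε, hε, hsep⟩ := hdist
  -- pointwise versions of the commutation/idempotency hypotheses
  have hPP : ∀ y : V, P (P y) = P y := fun y => DFunLike.congr_fun hP y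
  have hP'P' : ∀ y : V, P' (P' y) = P' y := fun y => DFunLike.congr_fun hP' y
  have hTPc : ∀ y : V, T (P y) = P (T y) := fun y => DFunLike.congr_fun hTP y
  have hTP'c : ∀ y : V, T (P' y) = P' (T y) := fun y => DFunLike.congr_fun hTP' y
  -- closedness of the four submodules
  have hrange : ∀ (Q : V →L[ℍᵐᵒᵖ] V), (∀ y : V, Q (Q y) = Q y) →
      ((LinearMap.range (Q : V →ₗ[ℍᵐᵒᵖ] V) : Submodule ℍᵐᵒᵖ V) : Set V) = {x : V | Q x = x} := by
    intro Q hQQ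
    ext x
    constructor
    · rintro ⟨y, rfl⟩
      exact hQQ y
    · intro hx
      exact ⟨x, hx⟩
  have hclrP : IsClosed ((LinearMap.range (P : V →ₗ[ℍᵐᵒᵖ] V) : Submodule ℍᵐᵒᵖ V) : Set V) := by
    rw [hrange P hPP]
    exact isClosed_eq P.continuous continuous_id
  have hclrP' : IsClosed ((LinearMap.range (P' : V →ₗ[ℍᵐᵒᵖ] V) : Submodule ℍᵐᵒᵖ V) : Set V) := by
    rw [hrange P' hP'P']
    exact isClosed_eq P'.continuous continuous_id
  have hker : ∀ (Q : V →L[ℍᵐᵒᵖ] V),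
      ((LinearMap.ker (Q : V →ₗ[ℍᵐᵒᵖ] V) : Submodule ℍᵐᵒᵖ V) : Set V) = {x : V | Q x = 0} := by
    intro Q
    ext x
    simp [LinearMap.mem_ker]
  have hclkP : IsClosed ((LinearMap.ker (P : V →ₗ[ℍᵐᵒᵖ] V) : Submodule ℍᵐᵒᵖ V) : Set V) := by
    rw [hker P]
    exact isClosed_eq P.continuous continuous_const
  have hclkP' : IsClosed ((LinearMap.ker (P' : V →ₗ[ℍᵐᵒᵖ] V) : Submodule ℍᵐᵒᵖ V) : Set V) := by
    rw [hker P']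
    exact isClosed_eq P'.continuous continuous_const
  -- disjointness of the relevant S-spectra
  have hdisjRK : ∀ q : ℍ, q ∈ sSpectrum (restrictOp T (LinearMap.range (P : V →ₗ[ℍᵐᵒᵖ] V)) h₁) →
      q ∈ sSpectrum (restrictOp T (LinearMap.ker (P : V →ₗ[ℍᵐᵒᵖ] V)) h₂) → False := by
    intro q hq1 hq2
    have := hsep q hq1 q hq2
    rw [dist_self] at this
    linarith
  -- (i) range P' ⊆ range P
  have inc1 : LinearMap.range (P' : V →ₗ[ℍᵐᵒᵖ] V) ≤ LinearMap.range (P : V →ₗ[ℍᵐᵒᵖ] V) := by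
    have hG : ∀ x ∈ LinearMap.range (P' : V →ₗ[ℍᵐᵒᵖ] V), (1 - P) x ∈ LinearMap.ker (P : V →ₗ[ℍᵐᵒᵖ] V) := by
      intro x _
      simp only [LinearMap.mem_ker]
      show P (x - P x) = 0
      rw [map_sub, hPP, sub_self]
    have hGT : ∀ x : V, (1 - P) (T x) = T ((1 - P) x) := by
      intro x
      show T x - P (T x) = T (x - P x)
      rw [map_sub, hTPc]
    have hv := stmt3_incl_vanish hnorm T (1 - P) (LinearMap.range (P' : V →ₗ[ℍᵐᵒᵖ] V)) (LinearMap.ker (P : V →ₗ[ℍᵐᵒᵖ] V))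
      hclrP' hclkP h₁' h₂ hG hGT (by
        intro q hq1 hq2
        rw [hσ₁] at hq1
        exact hdisjRK q hq1 hq2)
    intro x hx
    have h0 := hv x hx
    have hpx : P x = x := by
      have : x - P x = 0 := h0
      have := sub_eq_zero.mp this
      exact this.symm
    exact ⟨x, hpx⟩
  -- (ii) range P ⊆ range P'
  have inc2 : LinearMap.range (P : V →ₗ[ℍᵐᵒᵖ] V) ≤ LinearMap.range (P' : V →ₗ[ℍᵐᵒᵖ] V) := by
    have hG : ∀ x ∈ LinearMap.range (P : V →ₗ[ℍᵐᵒᵖ] V), (1 - P') x ∈ LinearMap.ker (P' : V →ₗ[ℍᵐᵒᵖ] V) := by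
      intro x _
      simp only [LinearMap.mem_ker]
      show P' (x - P' x) = 0
      rw [map_sub, hP'P', sub_self]
    have hGT : ∀ x : V, (1 - P') (T x) = T ((1 - P') x) := by
      intro x
      show T x - P' (T x) = T (x - P' x)
      rw [map_sub, hTP'c]
    have hv := stmt3_incl_vanish hnorm T (1 - P') (LinearMap.range (P : V →ₗ[ℍᵐᵒᵖ] V)) (LinearMap.ker (P' : V →ₗ[ℍᵐᵒᵖ] V))
      hclrP hclkP' h₁ h₂' hG hGT (by
        intro q hq1 hq2
        rw [hσ₂] at hq2
        exact hdisjRK q hq1 hq2)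
    intro x hx
    have h0 := hv x hx
    have hpx : P' x = x := by
      have : x - P' x = 0 := h0
      have := sub_eq_zero.mp this
      exact this.symm
    exact ⟨x, hpx⟩
  -- (iii) ker P' ⊆ ker P
  have inc3 : LinearMap.ker (P' : V →ₗ[ℍᵐᵒᵖ] V) ≤ LinearMap.ker (P : V →ₗ[ℍᵐᵒᵖ] V) := by
    have hG : ∀ x ∈ LinearMap.ker (P' : V →ₗ[ℍᵐᵒᵖ] V), P x ∈ LinearMap.range (P : V →ₗ[ℍᵐᵒᵖ] V) := by
      intro x _
      exact ⟨x, rfl⟩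
    have hGT : ∀ x : V, P (T x) = T (P x) := fun x => (hTPc x).symm
    have hv := stmt3_incl_vanish hnorm T P (LinearMap.ker (P' : V →ₗ[ℍᵐᵒᵖ] V)) (LinearMap.range (P : V →ₗ[ℍᵐᵒᵖ] V))
      hclkP' hclrP h₂' h₁ hG hGT (by
        intro q hq1 hq2
        rw [hσ₂] at hq1
        exact hdisjRK q hq2 hq1)
    intro x hx
    exact LinearMap.mem_ker.2 (hv x hx)
  -- (iv) ker P ⊆ ker P'
  have inc4 : LinearMap.ker (P : V →ₗ[ℍᵐᵒᵖ] V) ≤ LinearMap.ker (P' : V →ₗ[ℍᵐᵒᵖ] V) := by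
    have hG : ∀ x ∈ LinearMap.ker (P : V →ₗ[ℍᵐᵒᵖ] V), P' x ∈ LinearMap.range (P' : V →ₗ[ℍᵐᵒᵖ] V) := by
      intro x _
      exact ⟨x, rfl⟩
    have hGT : ∀ x : V, P' (T x) = T (P' x) := fun x => (hTP'c x).symm
    have hv := stmt3_incl_vanish hnorm T P' (LinearMap.ker (P : V →ₗ[ℍᵐᵒᵖ] V)) (LinearMap.range (P' : V →ₗ[ℍᵐᵒᵖ] V))
      hclkP hclrP' h₂ h₁' hG hGT (by
        intro q hq1 hq2
        rw [hσ₁] at hq2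
        exact hdisjRK q hq2 hq1)
    intro x hx
    exact LinearMap.mem_ker.2 (hv x hx)
  have hrangeEq : LinearMap.range (P' : V →ₗ[ℍᵐᵒᵖ] V) = LinearMap.range (P : V →ₗ[ℍᵐᵒᵖ] V) := le_antisymm inc1 inc2
  have hkerEq : LinearMap.ker (P' : V →ₗ[ℍᵐᵒᵖ] V) = LinearMap.ker (P : V →ₗ[ℍᵐᵒᵖ] V) := le_antisymm inc3 inc4
  refine ⟨hrangeEq, hkerEq, ?_⟩
  apply ContinuousLinearMap.ext
  intro x
  have h1 : P (P' x) = P' x := by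
    have hmem : P' x ∈ LinearMap.range (P : V →ₗ[ℍᵐᵒᵖ] V) := hrangeEq ▸ LinearMap.mem_range_self _ x
    obtain ⟨y, hy⟩ := hmem
    rw [← hy]; exact hPP y
  have h2 : P (x - P' x) = 0 := by
    have hmem : x - P' x ∈ LinearMap.ker (P' : V →ₗ[ℍᵐᵒᵖ] V) := by
      simp only [LinearMap.mem_ker]
      rw [map_sub]; exact sub_eq_zero.2 (hP'P' x).symm
    have := hkerEq ▸ hmem
    exact LinearMap.mem_ker.1 this
  have : P x = P (P' x) + P (x - P' x) := by
    rw [← map_add]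
    congr 1
    abel
  rw [this, h1, h2, add_zero]
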